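/- The function A(R) = (λR/B)·Q(2^{R/B} − 1), where Q(τ) = 1/₂F₁(−2/α, 1; 1 − 2/α; −τ) with α > 2, satisfies A(R) → 0 as R → 0⁺ and A(R) → 0 as R → ∞; hence A attains a maximum at some finite R* > 0. -/

import Mathlib

open MeasureTheory Real Set Filter Topology

/-- `hyp2F1 α b z` is the Gauss hypergeometric function `₂F₁(−2/α, b; 1 − 2/α; z)`
(for `α > 2`, `b > 0`, `z ≤ 0`), expressed through its integral representation. -/
noncomputable def hyp2F1 (α b z : ℝ) : ℝ :=
  1 + 2 * ∫ u in Ioi (1 : ℝ), (1 - (1 - z * u ^ (-α)) ^ (-b)) * u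

/-- Coverage probability `Q(τ) = 1/₂F₁(−2/α,1;1−2/α;−τ)`. -/
noncomputable def covQ (α τ : ℝ) : ℝ := 1 / hyp2F1 α 1 (-τ)


noncomputable def gg (α τ u : ℝ) : ℝ := (1 - (1 + τ * u ^ (-α))⁻¹) * u

lemma hyp_eq (α τ : ℝ) : hyp2F1 α 1 (-τ) = 1 + 2 * ∫ u in Ioi (1:ℝ), gg α τ u := by
  unfold hyp2F1 gg
  congr 1
  congr 1
  apply integral_congr_ae
  filter_upwards with u
  rw [show (1 - (-τ) * u ^ (-α)) = 1 + τ * u ^ (-α) by ring, Real.rpow_neg_one]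

lemma gg_nonneg {α τ u : ℝ} (hτ : 0 ≤ τ) (hu : 1 < u) : 0 ≤ gg α τ u := by
  have hu0 : (0:ℝ) < u := lt_trans one_pos hu
  have hs : 0 ≤ τ * u ^ (-α) := mul_nonneg hτ (Real.rpow_nonneg hu0.le _)
  have h1 : (1 + τ * u ^ (-α))⁻¹ ≤ 1 := by
    rw [inv_le_one_iff₀]; right; linarith
  unfold gg
  have := hu0.le
  nlinarith

lemma gg_le {α τ u : ℝ} (hτ : 0 ≤ τ) (hu : 1 < u) : gg α τ u ≤ τ * u ^ (1 - α) := by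
  have hu0 : (0:ℝ) < u := lt_trans one_pos hu
  set s := τ * u ^ (-α) with hs_def
  have hs : 0 ≤ s := mul_nonneg hτ (Real.rpow_nonneg hu0.le _)
  have hpos : (0:ℝ) < 1 + s := by linarith
  have key : 1 - (1 + s)⁻¹ ≤ s := by
    have h2 : (1 - s) * (1 + s) ≤ 1 := by nlinarith
    have : 1 - s ≤ (1 + s)⁻¹ := by
      rw [inv_eq_one_div]
      exact (le_div_iff₀ hpos).mpr (by nlinarith)
    linarith
  have : gg α τ u ≤ s * u := by
    unfold gg
    exact mul_le_mul_of_nonneg_right key hu0.le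
  calc gg α τ u ≤ s * u := this
    _ = τ * u ^ (1 - α) := by
        rw [hs_def, mul_assoc, ← Real.rpow_add_one hu0.ne']
        ring_nf

lemma gg_continuousOn {α τ : ℝ} (hτ : 0 ≤ τ) : ContinuousOn (gg α τ) (Ioi 1) := by
  unfold gg
  apply ContinuousOn.mul _ continuousOn_id
  apply ContinuousOn.sub continuousOn_const
  apply ContinuousOn.inv₀
  · exact ContinuousOn.add continuousOn_const
      (ContinuousOn.mul continuousOn_const
        (ContinuousOn.rpow_const continuousOn_id
          (fun u hu => Or.inl (ne_of_gt (lt_trans one_pos hu)))))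
  · intro u hu
    have : 0 ≤ τ * u ^ (-α) := mul_nonneg hτ (Real.rpow_nonneg (le_of_lt (lt_trans one_pos hu)) _)
    positivity

lemma bound_integrable {α : ℝ} (hα : 2 < α) (c : ℝ) :
    IntegrableOn (fun u : ℝ => c * u ^ (1 - α)) (Ioi 1) := by
  exact (integrableOn_Ioi_rpow_of_lt (by linarith) one_pos).const_mul c

lemma gg_integrable {α τ : ℝ} (hα : 2 < α) (hτ : 0 ≤ τ) :
    IntegrableOn (gg α τ) (Ioi 1) := by
  apply Integrable.mono' (bound_integrable hα τ)
    ((gg_continuousOn hτ).aestronglyMeasurable measurableSet_Ioi)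
  rw [ae_restrict_iff' measurableSet_Ioi]
  filter_upwards with u hu
  rw [Real.norm_eq_abs, abs_of_nonneg (gg_nonneg hτ hu)]
  exact gg_le hτ hu

lemma intI_nonneg {α τ : ℝ} (hτ : 0 ≤ τ) : 0 ≤ ∫ u in Ioi (1:ℝ), gg α τ u :=
  setIntegral_nonneg measurableSet_Ioi (fun u hu => gg_nonneg hτ hu)

lemma hyp_ge_one {α τ : ℝ} (hτ : 0 ≤ τ) : 1 ≤ hyp2F1 α 1 (-τ) := by
  rw [hyp_eq]; linarith [intI_nonneg (α := α) hτ]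

lemma covQ_pos {α τ : ℝ} (hτ : 0 ≤ τ) : 0 < covQ α τ := by
  unfold covQ
  exact div_pos one_pos (lt_of_lt_of_le one_pos (hyp_ge_one hτ))

lemma covQ_le_one {α τ : ℝ} (hτ : 0 ≤ τ) : covQ α τ ≤ 1 := by
  unfold covQ
  rw [div_le_one (lt_of_lt_of_le one_pos (hyp_ge_one hτ))]
  exact hyp_ge_one hτ

lemma intI_lower {α τ : ℝ} (hα : 2 < α) (hτ : 1 ≤ τ) :
    (τ ^ (2/α) - 1) / 4 ≤ ∫ u in Ioi (1:ℝ), gg α τ u := by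
  have hα0 : (0:ℝ) < α := by linarith
  have hτ0 : (0:ℝ) ≤ τ := by linarith
  set T := τ ^ (α⁻¹) with hT_def
  have hT1 : 1 ≤ T := Real.one_le_rpow hτ (by positivity)
  have hTα : T ^ α = τ := Real.rpow_inv_rpow hτ0 hα0.ne'
  -- step: on Ioc 1 T, gg ≥ u/2
  have hpt : ∀ u ∈ Ioc (1:ℝ) T, u / 2 ≤ gg α τ u := by
    intro u hu
    have hu0 : (0:ℝ) < u := lt_trans one_pos hu.1
    have huα : u ^ α ≤ τ := by
      rw [← hTα]; exact Real.rpow_le_rpow hu0.le hu.2 hα0.le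
    have huαpos : (0:ℝ) < u ^ α := Real.rpow_pos_of_pos hu0 _
    have hs1 : 1 ≤ τ * u ^ (-α) := by
      rw [Real.rpow_neg hu0.le, ← div_eq_mul_inv, le_div_iff₀ huαpos]
      linarith
    have hinv : (1 + τ * u ^ (-α))⁻¹ ≤ 1/2 := by
      rw [inv_eq_one_div]
      apply div_le_div_of_nonneg_left one_pos.le (by norm_num) (by linarith)
    unfold gg
    nlinarith
  -- ∫_{Ioc 1 T} u/2 ≤ ∫_{Ioc 1 T} gg ≤ ∫_{Ioi 1} gg
  have hmono1 : ∫ u in Ioc (1:ℝ) T, gg α τ u ≤ ∫ u in Ioi (1:ℝ), gg α τ u := by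
    apply setIntegral_mono_set (gg_integrable hα hτ0)
    · rw [Filter.EventuallyLE, ae_restrict_iff' measurableSet_Ioi]
      filter_upwards with u hu using gg_nonneg hτ0 hu
    · exact Filter.Eventually.of_forall (fun u hu => hu.1)
  have hmono2 : ∫ u in Ioc (1:ℝ) T, u / 2 ≤ ∫ u in Ioc (1:ℝ) T, gg α τ u := by
    apply setIntegral_mono_on
    · exact (continuous_id.div_const 2).integrableOn_Ioc
    · exact (gg_integrable hα hτ0).mono_set (fun u hu => hu.1)
    · exact measurableSet_Ioc
    · exact hpt
  have hcalc : ∫ u in Ioc (1:ℝ) T, u / 2 = (τ ^ (2/α) - 1) / 4 := by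
    rw [← intervalIntegral.integral_of_le hT1, intervalIntegral.integral_div, integral_id]
    have : T ^ 2 = τ ^ (2/α) := by
      rw [hT_def, ← Real.rpow_natCast (τ ^ α⁻¹) 2, ← Real.rpow_mul hτ0]
      norm_num
      rw [mul_comm, div_eq_mul_inv]
    rw [this]; ring
  linarith

lemma covQ_decay {α τ : ℝ} (hα : 2 < α) (hτ : 1 ≤ τ) :
    covQ α τ ≤ 2 * τ ^ (-(2/α)) := by
  have hτ0 : (0:ℝ) < τ := by linarith
  have hp : (0:ℝ) < τ ^ (2/α) := Real.rpow_pos_of_pos hτ0 _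
  have hh : τ ^ (2/α) / 2 ≤ hyp2F1 α 1 (-τ) := by
    rw [hyp_eq]
    have := intI_lower hα hτ
    linarith
  have hhpos : (0:ℝ) < hyp2F1 α 1 (-τ) := lt_of_lt_of_le (by positivity) hh
  unfold covQ
  rw [Real.rpow_neg hτ0.le, div_le_iff₀ hhpos]
  calc (1:ℝ) = 2 * (τ ^ (2/α))⁻¹ * (τ ^ (2/α) / 2) := by field_simp
    _ ≤ 2 * (τ ^ (2/α))⁻¹ * hyp2F1 α 1 (-τ) :=
        mul_le_mul_of_nonneg_left hh (by positivity)

lemma covQ_continuousAt {α : ℝ} (hα : 2 < α) {τ₀ : ℝ} (hτ₀ : 0 < τ₀) :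
    ContinuousAt (covQ α) τ₀ := by
  have hI : ContinuousAt (fun τ => ∫ u in Ioi (1:ℝ), gg α τ u) τ₀ := by
    apply continuousAt_of_dominated (bound := fun u => (τ₀ + 1) * u ^ (1 - α))
    · filter_upwards [Ioo_mem_nhds hτ₀ (lt_add_one τ₀)] with τ hτ
      exact ((gg_continuousOn (le_of_lt hτ.1)).aestronglyMeasurable measurableSet_Ioi)
    · filter_upwards [Ioo_mem_nhds hτ₀ (lt_add_one τ₀)] with τ hτ
      rw [ae_restrict_iff' measurableSet_Ioi]
      filter_upwards with u hu
      rw [Real.norm_eq_abs, abs_of_nonneg (gg_nonneg hτ.1.le hu)]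
      calc gg α τ u ≤ τ * u ^ (1 - α) := gg_le hτ.1.le hu
        _ ≤ (τ₀ + 1) * u ^ (1 - α) := by
            apply mul_le_mul_of_nonneg_right hτ.2.le
              (Real.rpow_nonneg (le_of_lt (lt_trans one_pos hu)) _)
    · exact bound_integrable hα (τ₀ + 1)
    · rw [ae_restrict_iff' measurableSet_Ioi]
      filter_upwards with u hu
      have hu0 : (0:ℝ) < u := lt_trans one_pos hu
      have hc : (0:ℝ) < u ^ (-α) := Real.rpow_pos_of_pos hu0 _
      have hne : 1 + τ₀ * u ^ (-α) ≠ 0 := by positivity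
      unfold gg
      exact ((continuousAt_const.sub (((continuousAt_const.add
        (continuousAt_id.mul continuousAt_const))).inv₀ hne)).mul continuousAt_const)
  have hfun : covQ α = fun τ => 1 / (1 + 2 * ∫ u in Ioi (1:ℝ), gg α τ u) := by
    funext τ; rw [covQ, hyp_eq]
  rw [hfun]
  apply ContinuousAt.div continuousAt_const
    (continuousAt_const.add (continuousAt_const.mul hI))
  have := intI_nonneg (α := α) (τ := τ₀) hτ₀.le
  exact ne_of_gt (show (0:ℝ) < 1 + 2 * ∫ u in Ioi (1:ℝ), gg α τ₀ u by linarith)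


/-- One tier's ASE contribution `A(R) = (λ R / B) Q(2^(R/B) − 1)` (Proposition 1) satisfies
`A(R) → 0` as `R → 0⁺` and as `R → ∞`; hence `A` attains its maximum over `(0,∞)` at some
finite `R* > 0`. -/
theorem ase_attains_maximum (l B α : ℝ) (hl : 0 < l) (hB : 0 < B) (hα : 2 < α) :
    Tendsto (fun R : ℝ => l * R / B * covQ α (2 ^ (R / B) - 1)) (𝓝[>] 0) (𝓝 0) ∧
    Tendsto (fun R : ℝ => l * R / B * covQ α (2 ^ (R / B) - 1)) atTop (𝓝 0) ∧
    ∃ Rstar : ℝ, 0 < Rstar ∧ ∀ R : ℝ, 0 < R →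
      l * R / B * covQ α (2 ^ (R / B) - 1) ≤
        l * Rstar / B * covQ α (2 ^ (Rstar / B) - 1) := by
  set f : ℝ → ℝ := fun R => l * R / B * covQ α (2 ^ (R / B) - 1) with hf
  have hτ0 : ∀ R : ℝ, 0 ≤ R → (0:ℝ) ≤ 2 ^ (R / B) - 1 := fun R hR =>
    sub_nonneg.mpr (Real.one_le_rpow one_le_two (div_nonneg hR hB.le))
  have hf_nonneg : ∀ R : ℝ, 0 ≤ R → 0 ≤ f R := by
    intro R hR
    exact mul_nonneg (by positivity) (covQ_pos (hτ0 R hR)).le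
  have hf_le : ∀ R : ℝ, 0 ≤ R → f R ≤ l * R / B := by
    intro R hR
    exact mul_le_of_le_one_right (by positivity) (covQ_le_one (hτ0 R hR))
  -- Part 1
  have h1 : Tendsto f (𝓝[>] 0) (𝓝 0) := by
    apply tendsto_of_tendsto_of_tendsto_of_le_of_le' (g := fun _ => (0:ℝ))
      (h := fun R => l * R / B) tendsto_const_nhds
    · have : Tendsto (fun R : ℝ => l * R / B) (𝓝 0) (𝓝 0) := by
        have h := Continuous.tendsto (show Continuous (fun R : ℝ => l * R / B) by fun_prop) 0
        simpa using h
      exact this.mono_left nhdsWithin_le_nhds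
    · filter_upwards [self_mem_nhdsWithin] with R hR using hf_nonneg R (le_of_lt hR)
    · filter_upwards [self_mem_nhdsWithin] with R hR using hf_le R (le_of_lt hR)
  -- Part 2
  have hlog2 : (0:ℝ) < Real.log 2 := Real.log_pos one_lt_two
  set k : ℝ := 2 * Real.log 2 / (α * B) with hk_def
  have hk : 0 < k := by
    apply div_pos (by linarith) (by positivity)
  set C : ℝ := l / B * (2 * Real.exp (2 / α * Real.log 2)) with hC_def
  have hbound : ∀ R : ℝ, max B 1 ≤ R → f R ≤ C * R * Real.exp (-(k * R)) := by
    intro R hR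
    have hRB : 1 ≤ R / B := (le_div_iff₀ hB).mpr (by simpa using le_trans (le_max_left B 1) hR)
    have hR1 : (1:ℝ) ≤ R := le_trans (le_max_right B 1) hR
    set x : ℝ := (2:ℝ) ^ (R / B) with hx_def
    have hx2 : (2:ℝ) ≤ x := by
      calc (2:ℝ) = 2 ^ (1:ℝ) := (Real.rpow_one 2).symm
        _ ≤ x := Real.rpow_le_rpow_of_exponent_le one_le_two hRB
    have hx2pos : (0:ℝ) < x / 2 := by linarith
    have hτ1 : (1:ℝ) ≤ x - 1 := by linarith
    have hxhalf : x / 2 ≤ x - 1 := by linarith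
    have hcov : covQ α (x - 1) ≤ 2 * (x / 2) ^ (-(2/α)) := by
      calc covQ α (x - 1) ≤ 2 * (x - 1) ^ (-(2/α)) := covQ_decay hα hτ1
        _ ≤ 2 * (x / 2) ^ (-(2/α)) := by
            apply mul_le_mul_of_nonneg_left
              (Real.rpow_le_rpow_of_nonpos hx2pos hxhalf
                (neg_nonpos.mpr (by positivity))) (by norm_num)
    have hα0 : (0:ℝ) < α := by linarith
    have hexp : (x / 2) ^ (-(2/α)) = Real.exp (2/α * Real.log 2) * Real.exp (-(k * R)) := by
      rw [Real.rpow_def_of_pos hx2pos, ← Real.exp_add]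
      congr 1
      rw [Real.log_div (by positivity) two_ne_zero, hx_def,
        Real.log_rpow two_pos, hk_def]
      field_simp
      ring
    have hfr : f R ≤ (l * R / B) * (2 * ((x / 2) ^ (-(2/α)))) := by
      have : f R = (l * R / B) * covQ α (x - 1) := by rw [hf]
      rw [this]
      exact mul_le_mul_of_nonneg_left hcov (by positivity)
    calc f R ≤ (l * R / B) * (2 * ((x / 2) ^ (-(2/α)))) := hfr
      _ = C * R * Real.exp (-(k * R)) := by rw [hexp, hC_def]; ring
  have h2 : Tendsto f atTop (𝓝 0) := by
    apply tendsto_of_tendsto_of_tendsto_of_le_of_le' (g := fun _ => (0:ℝ))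
      (h := fun R => C * R * Real.exp (-(k * R))) tendsto_const_nhds
    · have hcomp := (tendsto_pow_mul_exp_neg_atTop_nhds_zero 1).comp
        (Tendsto.const_mul_atTop hk tendsto_id)
      have heq : (fun R : ℝ => C * R * Real.exp (-(k * R))) =
          fun R : ℝ => (C / k) * ((k * R) ^ 1 * Real.exp (-(k * R))) := by
        funext R; field_simp
      rw [heq]
      simpa using hcomp.const_mul (C / k)
    · filter_upwards [eventually_ge_atTop (0:ℝ)] with R hR using hf_nonneg R hR
    · filter_upwards [eventually_ge_atTop (max B 1)] with R hR using hbound R hR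
  -- Part 3: continuity
  have hcont : ∀ R : ℝ, 0 < R → ContinuousAt f R := by
    intro R hR
    have hinner : Continuous (fun R : ℝ => (2:ℝ) ^ (R / B) - 1) := by
      have : (fun R : ℝ => (2:ℝ) ^ (R / B)) =
          fun R : ℝ => Real.exp (Real.log 2 * (R / B)) := by
        funext R; rw [Real.rpow_def_of_pos two_pos]
      exact (by rw [this]; fun_prop : Continuous fun R : ℝ => (2:ℝ) ^ (R / B)).sub continuous_const
    have hτpos : (0:ℝ) < 2 ^ (R / B) - 1 := by
      have : (1:ℝ) < 2 ^ (R / B) :=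
        (Real.one_lt_rpow_iff_of_pos two_pos).mpr (Or.inl ⟨one_lt_two, div_pos hR hB⟩)
      linarith
    have hc1 : ContinuousAt (fun R : ℝ => l * R / B) R :=
      (show Continuous (fun R : ℝ => l * R / B) by fun_prop).continuousAt
    have hc2 := ContinuousAt.comp (g := covQ α)
      (f := fun R : ℝ => (2:ℝ) ^ (R / B) - 1) (x := R)
      (covQ_continuousAt hα hτpos) hinner.continuousAt
    exact hc1.mul hc2
  -- f B > 0
  have hfB : 0 < f B := by
    rw [hf]
    exact mul_pos (by positivity) (covQ_pos (hτ0 B hB.le))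
  -- small-R region
  obtain ⟨ε, hε, hsmall⟩ := Metric.eventually_nhds_iff.mp
    (eventually_nhdsWithin_iff.mp (h1.eventually (eventually_lt_nhds hfB)))
  -- large-R region
  obtain ⟨M, hM⟩ := eventually_atTop.mp (h2.eventually (eventually_lt_nhds hfB))
  set a : ℝ := min (ε / 2) B with ha_def
  set b : ℝ := max M B with hb_def
  have ha : 0 < a := lt_min (half_pos hε) hB
  have hBmem : B ∈ Icc a b := ⟨min_le_right _ _, le_max_right _ _⟩
  obtain ⟨Rstar, hRs_mem, hmax⟩ := isCompact_Icc.exists_isMaxOn ⟨B, hBmem⟩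
    (fun x hx => (hcont x (lt_of_lt_of_le ha hx.1)).continuousWithinAt)
  refine ⟨h1, h2, Rstar, lt_of_lt_of_le ha hRs_mem.1, ?_⟩
  intro R hR
  show f R ≤ f Rstar
  by_cases hmem : R ∈ Icc a b
  · exact hmax hmem
  · have hAB : f B ≤ f Rstar := hmax hBmem
    rcases lt_or_ge R a with h | h
    · have hRε : dist R 0 < ε := by
        rw [Real.dist_eq, sub_zero, abs_of_pos hR]
        have : a ≤ ε / 2 := min_le_left _ _
        linarith
      exact le_of_lt (lt_of_lt_of_le (hsmall hRε hR) hAB)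
    · have hbR : b < R := by
        rw [mem_Icc] at hmem; push_neg at hmem
        exact hmem h
      have : M ≤ R := le_trans (le_max_left M B) hbR.le
      exact le_of_lt (lt_of_lt_of_le (hM R this) hAB)
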